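/- In a local minimum, every falsified clause is critical: let I be a complete interpretation such that no single-variable flip strictly decreases the number of clauses of Σ falsified by I. Then for every clause α falsified by I and every literal ℓ ∈ α, there exists a clause α' ∈ Σ with ¬ℓ ∈ α' that is once-satisfied by I (its unique satisfied literal being ¬ℓ). -/

import Mathlib

abbrev Var := Nat
abbrev Lit := Var × Bool

def Lit.neg (l : Lit) : Lit := (l.1, !l.2)

abbrev Clause := Finset Lit
abbrev CNF := Finset Clause

/-- An interpretation satisfies a literal. -/
def satLit (I : Var → Bool) (l : Lit) : Prop := I l.1 = l.2

/-- An interpretation satisfies a clause if it makes some literal true. -/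
def satClause (I : Var → Bool) (c : Clause) : Prop := ∃ l ∈ c, satLit I l

/-- An interpretation satisfies a CNF formula if it satisfies every clause. -/
def satCNF (I : Var → Bool) (S : CNF) : Prop := ∀ c ∈ S, satClause I c

def Satisfiable (S : CNF) : Prop := ∃ I, satCNF I S

/-- Γ is a minimal unsatisfiable sub-formula (MUS) of S. -/
def IsMUS (S Γ : CNF) : Prop :=
  Γ ⊆ S ∧ ¬ Satisfiable Γ ∧ ∀ Δ ⊂ Γ, Satisfiable Δ

/-- Simplification of S by assigning literal ℓ to true. -/
def simpCNF (S : CNF) (l : Lit) : CNF :=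
  (S.filter (fun c => l ∉ c)).image (fun c => c.erase l.neg)

/-- Flip the value of variable x in interpretation I. -/
def flipVar (I : Var → Bool) (x : Var) : Var → Bool :=
  fun v => if v = x then !I v else I v

/-- Clause c is once-satisfied by I on literal z. -/
def onceSat (I : Var → Bool) (c : Clause) (z : Lit) : Prop :=
  z ∈ c ∧ satLit I z ∧ ∀ l ∈ c, l ≠ z → ¬ satLit I l

open Classical in
/-- Number of clauses of S falsified by I. -/
noncomputable def numFalsified (S : CNF) (I : Var → Bool) : ℕ :=
  (S.filter (fun c => ¬ satClause I c)).card

/-- One unit-propagation step. -/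
def UPstep (S S' : CNF) : Prop :=
  ∃ l : Lit, ({l} : Clause) ∈ S ∧ S' = simpCNF S l

theorem local_min_falsified_critical (S : CNF) (I : Var → Bool)
    (hnotaut : ∀ c ∈ S, ∀ l ∈ c, Lit.neg l ∉ c)
    (hmin : ∀ x : Var, numFalsified S I ≤ numFalsified S (flipVar I x)) :
    ∀ α ∈ S, ¬ satClause I α →
      ∀ l ∈ α, ∃ α' ∈ S, Lit.neg l ∈ α' ∧ onceSat I α' (Lit.neg l) := by
  classical
  intro α hαS hαfal l hlα
  by_contra h
  push_neg at h
  set x := l.1 with hx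
  have hIl : ¬ satLit I l := fun hs => hαfal ⟨l, hlα, hs⟩
  have hIx : I x = !l.2 := by
    simp only [satLit] at hIl
    cases hb : I x <;> cases hl2 : l.2 <;> simp_all [hx]
  have hflipsat : ∀ z : Lit, z.1 ≠ x → (satLit (flipVar I x) z ↔ satLit I z) := by
    intro z hz
    simp [satLit, flipVar, hz]
  -- α becomes satisfied after flipping
  have hαflip : satClause (flipVar I x) α := by
    refine ⟨l, hlα, ?_⟩
    simp [satLit, flipVar, hx, hIx]
    exact hIx
  -- every clause falsified after the flip was falsified before
  have hsub : S.filter (fun c => ¬ satClause (flipVar I x) c) ⊂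
      S.filter (fun c => ¬ satClause I c) := by
    constructor
    · intro c hc
      simp only [Finset.mem_filter] at hc ⊢
      obtain ⟨hcS, hcf⟩ := hc
      refine ⟨hcS, fun hcsat => ?_⟩
      obtain ⟨z, hzc, hzsat⟩ := hcsat
      by_cases hzx : z.1 = x
      · -- z = (x, I x) = Lit.neg l, and c is once-satisfied on it
        have hz : z = Lit.neg l := by
          have : z.2 = I x := by rw [← hzsat, hzx]
          have : z = (x, !l.2) := by
            rw [Prod.ext_iff]; exact ⟨hzx, by rw [this, hIx]⟩
          simpa [Lit.neg, hx] using this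
        subst hz
        refine h c hcS hzc ⟨hzc, hzsat, ?_⟩
        intro l' hl'c hl'ne hl'sat
        by_cases hl'x : l'.1 = x
        · apply hl'ne
          have h2 : l'.2 = I x := by rw [← hl'sat, hl'x]
          rw [Prod.ext_iff]; exact ⟨by simp [hl'x, Lit.neg, hx], by simp [h2, hIx, Lit.neg]⟩
        · exact hcf ⟨l', hl'c, (hflipsat l' hl'x).mpr hl'sat⟩
      · exact hcf ⟨z, hzc, (hflipsat z hzx).mpr hzsat⟩
    · intro hsup
      have hαmem : α ∈ S.filter (fun c => ¬ satClause I c) := by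
        simp [Finset.mem_filter, hαS, hαfal]
      have := hsup hαmem
      simp only [Finset.mem_filter] at this
      exact this.2 hαflip
  have hlt : numFalsified S (flipVar I x) < numFalsified S I := by
    unfold numFalsified
    convert Finset.card_lt_card hsub using 2
  exact absurd (hmin x) (by omega)
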